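/- For a smooth function η: ℝ → ℝ, the two expressions for the elastic operator agree pointwise: (1+η_x²)^{-1/2} · ∂_x[ (1+η_x²)^{-1/2} · ∂_x( η_xx (1+η_x²)^{-3/2} ) ] + (1/2)·( η_xx (1+η_x²)^{-3/2} )³ = ∂_x²[ (1+η_x²)^{-1} · ∂_x( η_x (1+η_x²)^{-1/2} ) ] + (5/2)·∂_x[ η_x η_xx² (1+η_x²)^{-7/2} ]. -/

import Mathlib

open Real

private lemma rpow_half_pow' {P : ℝ} (hP : 0 < P) (k : ℕ) {r : ℝ} (hr : r = -(k : ℝ) / 2) :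
    P ^ r = (P ^ (-(1 : ℝ) / 2)) ^ k := by
  rw [← rpow_natCast (P ^ (-(1 : ℝ) / 2)) k, ← rpow_mul hP.le, hr]
  congr 1
  ring

/-- The two expressions for the nonlinear elastic (bending) operator `E(η)` agree
pointwise for a `C⁴` function `η : ℝ → ℝ`. -/
theorem elastic_operator_two_forms (η : ℝ → ℝ) (hη : ContDiff ℝ 4 η) :
    ∀ x : ℝ,
      (1 + deriv η x ^ 2) ^ (-(1 : ℝ) / 2) *
          deriv (fun x₁ => (1 + deriv η x₁ ^ 2) ^ (-(1 : ℝ) / 2) *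
            deriv (fun x₂ => deriv (deriv η) x₂ * (1 + deriv η x₂ ^ 2) ^ (-(3 : ℝ) / 2)) x₁) x
        + (1 / 2) * (deriv (deriv η) x * (1 + deriv η x ^ 2) ^ (-(3 : ℝ) / 2)) ^ 3
      = deriv (deriv (fun x₁ => (1 + deriv η x₁ ^ 2)⁻¹ *
            deriv (fun x₂ => deriv η x₂ * (1 + deriv η x₂ ^ 2) ^ (-(1 : ℝ) / 2)) x₁)) x
        + (5 / 2) * deriv (fun x₁ => deriv η x₁ * (deriv (deriv η) x₁) ^ 2 *
            (1 + deriv η x₁ ^ 2) ^ (-(7 : ℝ) / 2)) x := by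
  set u : ℝ → ℝ := deriv η with hu_def
  set v : ℝ → ℝ := deriv u with hv_def
  set w : ℝ → ℝ := deriv v with hw_def
  set z : ℝ → ℝ := deriv w with hz_def
  have h3 : ContDiff ℝ 3 u := by
    have := ContDiff.iterate_deriv' 3 1 (f := η) (by exact_mod_cast hη)
    simpa [Function.iterate_succ_apply'] using this
  have h2 : ContDiff ℝ 2 v := by
    have := ContDiff.iterate_deriv' 2 2 (f := η) (by exact_mod_cast hη)
    simpa [hu_def, hv_def, Function.iterate_succ_apply'] using this
  have h1 : ContDiff ℝ 1 w := by
    have := ContDiff.iterate_deriv' 1 3 (f := η) (by exact_mod_cast hη)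
    simpa [hu_def, hv_def, hw_def, Function.iterate_succ_apply'] using this
  have hu' : ∀ y : ℝ, HasDerivAt u (v y) y := fun y =>
    ((h3.differentiable (by norm_num)) y).hasDerivAt
  have hv' : ∀ y : ℝ, HasDerivAt v (w y) y := fun y =>
    ((h2.differentiable (by norm_num)) y).hasDerivAt
  have hw' : ∀ y : ℝ, HasDerivAt w (z y) y := fun y =>
    ((h1.differentiable (by norm_num)) y).hasDerivAt
  have hPpos : ∀ y : ℝ, (0 : ℝ) < 1 + u y ^ 2 := fun y => by positivity
  have hPne : ∀ y : ℝ, (1 + u y ^ 2) ≠ 0 := fun y => (hPpos y).ne'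
  set Q : ℝ → ℝ := fun y => (1 + u y ^ 2) ^ (-(1 : ℝ) / 2) with hQ_def
  have hQy : ∀ t : ℝ, (1 + u t ^ 2) ^ (-(1 : ℝ) / 2) = Q t := fun t => rfl
  have hQk : ∀ (k : ℕ) {r : ℝ}, r = -(k : ℝ) / 2 → ∀ y : ℝ, (1 + u y ^ 2) ^ r = Q y ^ k :=
    fun k r hr y => rpow_half_pow' (hPpos y) k hr
  have hQinv : ∀ y : ℝ, (1 + u y ^ 2)⁻¹ = Q y ^ 2 := by
    intro y
    rw [← hQk 2 (r := (-2 : ℝ) / 2) (by norm_num) y]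
    rw [show ((-2 : ℝ) / 2) = ((-1 : ℝ)) by norm_num, rpow_neg_one]
  have hrel : ∀ y : ℝ, Q y ^ 2 * (1 + u y ^ 2) = 1 := by
    intro y
    rw [← hQinv y, inv_mul_cancel₀ (hPne y)]
  have hPder : ∀ y : ℝ, HasDerivAt (fun t => 1 + u t ^ 2) (2 * u y * v y) y := by
    intro y
    have := ((hu' y).fun_pow 2).const_add 1
    refine this.congr_deriv ?_
    push_cast
    ring
  have hpow : ∀ (k : ℕ) {r : ℝ}, r = -(k : ℝ) / 2 → ∀ y : ℝ,
      HasDerivAt (fun t => (1 + u t ^ 2) ^ r) (-(k : ℝ) * u y * v y * Q y ^ (k + 2)) y := by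
    intro k r hr y
    have := (hPder y).rpow_const (p := r) (Or.inl (hPne y))
    convert this using 1
    rw [show r - 1 = -((k + 2 : ℕ) : ℝ) / 2 by push_cast [hr]; ring,
      rpow_half_pow' (hPpos y) (k + 2) rfl, hQy y]
    rw [hr]
    ring
  have hQ' : ∀ t : ℝ, HasDerivAt Q (-(1 : ℝ) * u t * v t * Q t ^ 3) t := by
    intro t
    have := hpow 1 (r := -(1 : ℝ) / 2) (by norm_num) t
    simpa using this
  intro x
  -- innermost, LHS
  have eA : (deriv fun x₂ => v x₂ * (1 + u x₂ ^ 2) ^ (-(3 : ℝ) / 2))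
      = fun y => w y * Q y ^ 3 - 3 * (u y * v y ^ 2 * Q y ^ 5) := by
    funext y
    have h := (hv' y).fun_mul (hpow 3 (r := -(3 : ℝ) / 2) (by norm_num) y)
    rw [h.deriv, hQk 3 (r := -(3 : ℝ) / 2) (by norm_num) y]
    push_cast
    linear_combination (0 : ℝ) * hrel y
  -- innermost, RHS
  have eC : (deriv fun x₂ => u x₂ * (1 + u x₂ ^ 2) ^ (-(1 : ℝ) / 2))
      = fun y => v y * Q y ^ 3 := by
    funext y
    have h := (hu' y).fun_mul (hpow 1 (r := -(1 : ℝ) / 2) (by norm_num) y)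
    rw [h.deriv, hQy y]
    push_cast
    linear_combination (-(v y * Q y)) * hrel y
  -- middle, LHS
  have eB : (deriv fun x₁ => (1 + u x₁ ^ 2) ^ (-(1 : ℝ) / 2) *
        (w x₁ * Q x₁ ^ 3 - 3 * (u x₁ * v x₁ ^ 2 * Q x₁ ^ 5)))
      = fun y => z y * Q y ^ 4 - 10 * u y * v y * w y * Q y ^ 6
          - 3 * v y ^ 3 * Q y ^ 6 + 18 * u y ^ 2 * v y ^ 3 * Q y ^ 8 := by
    funext y
    have hin := ((hw' y).fun_mul ((hQ' y).fun_pow 3)).fun_sub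
      ((((hu' y).fun_mul ((hv' y).fun_pow 2)).fun_mul ((hQ' y).fun_pow 5)).const_mul 3)
    have h := (hpow 1 (r := -(1 : ℝ) / 2) (by norm_num) y).fun_mul hin
    rw [h.deriv, hQy y]
    push_cast
    ring
  -- middle, RHS
  have eD : (deriv fun x₁ => (1 + u x₁ ^ 2)⁻¹ * (v x₁ * Q x₁ ^ 3))
      = fun y => w y * Q y ^ 5 - 5 * (u y * v y ^ 2 * Q y ^ 7) := by
    funext y
    have hinv : HasDerivAt (fun t => (1 + u t ^ 2)⁻¹) (-2 * u y * v y * Q y ^ 4) y := by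
      have := (hPder y).fun_inv (hPne y)
      refine this.congr_deriv ?_
      rw [show (-(2 * u y * v y) / (1 + u y ^ 2) ^ 2)
          = -(2 * u y * v y) * ((1 + u y ^ 2)⁻¹) ^ 2 by field_simp, hQinv y]
      ring
    have h := hinv.fun_mul ((hv' y).fun_mul ((hQ' y).fun_pow 3))
    rw [h.deriv, hQinv y]
    push_cast
    linear_combination (0 : ℝ) * hrel y
  -- outer, RHS middle term
  have eD2 : (deriv fun y => w y * Q y ^ 5 - 5 * (u y * v y ^ 2 * Q y ^ 7))
      = fun y => z y * Q y ^ 5 - 15 * u y * v y * w y * Q y ^ 7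
          - 5 * v y ^ 3 * Q y ^ 7 + 35 * u y ^ 2 * v y ^ 3 * Q y ^ 9 := by
    funext y
    have h := ((hw' y).fun_mul ((hQ' y).fun_pow 5)).fun_sub
      ((((hu' y).fun_mul ((hv' y).fun_pow 2)).fun_mul ((hQ' y).fun_pow 7)).const_mul 5)
    rw [h.deriv]
    push_cast
    ring
  -- RHS last term
  have eE : (deriv fun x₁ => u x₁ * v x₁ ^ 2 * (1 + u x₁ ^ 2) ^ (-(7 : ℝ) / 2)) x
      = v x ^ 3 * Q x ^ 7 + 2 * u x * v x * w x * Q x ^ 7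
        - 7 * u x ^ 2 * v x ^ 3 * Q x ^ 9 := by
    have h := ((hu' x).fun_mul ((hv' x).fun_pow 2)).fun_mul (hpow 7 (r := -(7 : ℝ) / 2) (by norm_num) x)
    rw [h.deriv, hQk 7 (r := -(7 : ℝ) / 2) (by norm_num) x]
    push_cast
    ring
  simp only [eA, eC]
  rw [eD]
  simp only [eB, eD2]
  rw [eE, hQk 3 (r := -(3 : ℝ) / 2) (by norm_num) x, hQy x]
  linear_combination (1 / 2 * v x ^ 3 * Q x ^ 7) * hrel x
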